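/- arXiv:2504.02038 — 4 statements merged into one kernel-verified Lean document; each statement's English description precedes it below -/
import Mathlib

section
/- Let σ : Γ → 2^V be a quasi-geometric topological triangulation of a (d−1)-dimensional simplex and let θ be a special l.s.o.p. for K[Γ]. Then the classes of the squarefree monomials {x^G : G an interior face of Γ} span the local face module L_θ(Γ) as a K-vector space. -/
open Finset MvPolynomial

set_option synthInstance.maxHeartbeats 1000000
set_option maxHeartbeats 4000000

noncomputable section

namespace LocalFace

/-! ## Geometric realization of abstract simplicial complexes -/

/-- The point of `ℝ^n` corresponding to the vertex `j`. -/
def stdPt (n : ℕ) (j : Fin n) : EuclideanSpace ℝ (Fin n) :=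
  EuclideanSpace.single j 1

/-- The geometric simplex spanned by a finite set of vertices. -/
def faceHull {n : ℕ} (F : Finset (Fin n)) : Set (EuclideanSpace ℝ (Fin n)) :=
  convexHull ℝ (stdPt n '' ↑F)

/-- The geometric realization of a collection of faces. -/
def realization {n : ℕ} (S : Set (Finset (Fin n))) : Set (EuclideanSpace ℝ (Fin n)) :=
  ⋃ F ∈ S, faceHull F

/-- The barycenter of a face. -/
def barycenter {n : ℕ} (F : Finset (Fin n)) : EuclideanSpace ℝ (Fin n) :=
  (F.card : ℝ)⁻¹ • ∑ j ∈ F, stdPt n j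

/-- `X` is homeomorphic to a closed ball of dimension `m`. -/
def IsBall {n : ℕ} (X : Set (EuclideanSpace ℝ (Fin n))) (m : ℕ) : Prop :=
  Nonempty (↥X ≃ₜ ↥(Metric.closedBall (0 : EuclideanSpace ℝ (Fin m)) 1))

/-- `x` is a manifold-interior point of the `m`-dimensional ball `X`: it has an
open neighbourhood in `X` homeomorphic to `ℝ^m`. -/
def IsInteriorPt {n : ℕ} (X : Set (EuclideanSpace ℝ (Fin n))) (m : ℕ)
    (x : EuclideanSpace ℝ (Fin n)) : Prop :=
  ∃ U : Set (↥X), IsOpen U ∧ (∃ hx : x ∈ X, (⟨x, hx⟩ : ↥X) ∈ U) ∧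
    Nonempty (↥U ≃ₜ EuclideanSpace ℝ (Fin m))

/-- A topological triangulation `σ : Γ → 2^V` of the `(d-1)`-dimensional simplex on
`V = {1,…,d}`, where `Γ` is a finite abstract simplicial complex with vertex set
`{1,…,n}`.  For every `U ⊆ V` the realization of `Γ_U = σ⁻¹(2^U)` is a ball of
dimension `|U| - 1`, and `σ⁻¹(U)` consists of the interior faces of this ball. -/
structure TopTriangulation (n d : ℕ) where
  faces : Finset (Finset (Fin n))
  empty_mem : ∅ ∈ faces
  down_closed : ∀ F ∈ faces, ∀ G ⊆ F, G ∈ faces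
  vertex_mem : ∀ j : Fin n, {j} ∈ faces
  σ : Finset (Fin n) → Finset (Fin d)
  mono : ∀ ⦃F G : Finset (Fin n)⦄, F ∈ faces → G ∈ faces → F ⊆ G → σ F ⊆ σ G
  sigma_empty_iff : ∀ F ∈ faces, (σ F = ∅ ↔ F = ∅)
  ball : ∀ U : Finset (Fin d), U.Nonempty →
    IsBall (realization {F | F ∈ faces ∧ σ F ⊆ U}) (U.card - 1)
  interior_iff : ∀ U : Finset (Fin d), U.Nonempty → ∀ F ∈ faces, F.Nonempty → σ F ⊆ U →
    (σ F = U ↔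
      IsInteriorPt (realization {F | F ∈ faces ∧ σ F ⊆ U}) (U.card - 1) (barycenter F))

namespace TopTriangulation

variable {n d : ℕ}

/-- A triangulation is vertex-induced if there is no face `G` of `Γ` and proper subset
`F ⊊ σ(G)` such that `σ({j}) ⊆ F` for all vertices `j` of `G`. -/
def VertexInduced (T : TopTriangulation n d) : Prop :=
  ¬ ∃ G ∈ T.faces, ∃ F ⊂ T.σ G, ∀ j ∈ G, T.σ {j} ⊆ F

/-- A triangulation is quasi-geometric if there is no face `G` of `Γ` and proper subset
`F ⊊ σ(G)` with `|F| < |G|` such that `σ({j}) ⊆ F` for all vertices `j` of `G`. -/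
def QuasiGeometric (T : TopTriangulation n d) : Prop :=
  ¬ ∃ G ∈ T.faces, ∃ F ⊂ T.σ G, F.card < G.card ∧ ∀ j ∈ G, T.σ {j} ⊆ F

/-- A face is interior if `σ(F) = V`. -/
def InteriorFace (T : TopTriangulation n d) (F : Finset (Fin n)) : Prop :=
  F ∈ T.faces ∧ T.σ F = Finset.univ

end TopTriangulation

/-! ## h-polynomials and local h-polynomials -/

/-- The `h`-polynomial of the subcomplex `Γ_U = σ⁻¹(2^U)`, a complex of
dimension `|U| - 1`. -/
def hPoly {n d : ℕ} (T : TopTriangulation n d) (U : Finset (Fin d)) : Polynomial ℤ :=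
  ∑ F ∈ T.faces.filter (fun F => T.σ F ⊆ U),
    Polynomial.X ^ F.card * (1 - Polynomial.X) ^ (U.card - F.card)

/-- The local `h`-polynomial `ℓ(Γ; t) = ∑_{U ⊆ V} (-1)^{|V|-|U|} h(Γ_U; t)`. -/
def localHPoly {n d : ℕ} (T : TopTriangulation n d) : Polynomial ℤ :=
  ∑ U : Finset (Fin d), (-1 : Polynomial ℤ) ^ (d - U.card) * hPoly T U

/-! ## Face rings and local face modules -/

variable (K : Type) [Field K] {n d : ℕ}

/-- The squarefree monomial `x^F` attached to a set of vertices. -/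
def faceMonomial (F : Finset (Fin n)) : MvPolynomial (Fin n) K :=
  ∏ j ∈ F, X j

/-- The Stanley–Reisner ideal of `Γ`. -/
def faceIdeal (T : TopTriangulation n d) : Ideal (MvPolynomial (Fin n) K) :=
  Ideal.span {p | ∃ F : Finset (Fin n), F ∉ T.faces ∧ p = faceMonomial K F}

/-- A family `θ` of linear forms is special if `θ i` is supported on the
variables `x_j` with `i ∈ σ({j})`. -/
def IsSpecial (T : TopTriangulation n d) (θ : Fin d → MvPolynomial (Fin n) K) : Prop :=
  ∀ i : Fin d, ∀ e ∈ (θ i).support, ∃ j : Fin n, i ∈ T.σ {j} ∧ e = Finsupp.single j 1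

/-- The ideal of the polynomial ring generated by the Stanley–Reisner relations
together with the linear forms `θ`. -/
def ringRel (T : TopTriangulation n d) (θ : Fin d → MvPolynomial (Fin n) K) :
    Ideal (MvPolynomial (Fin n) K) :=
  faceIdeal K T + Ideal.span (Set.range θ)

/-- The quotient `A_θ(Γ) = K[Γ]/(θ_1, …, θ_d)`. -/
abbrev FaceQuot (T : TopTriangulation n d) (θ : Fin d → MvPolynomial (Fin n) K) : Type :=
  MvPolynomial (Fin n) K ⧸ ringRel K T θ

/-- The quotient map onto `A_θ(Γ)`. -/
def proj (T : TopTriangulation n d) (θ : Fin d → MvPolynomial (Fin n) K) :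
    MvPolynomial (Fin n) K →+* FaceQuot K T θ :=
  Ideal.Quotient.mk (ringRel K T θ)

/-- `θ` is a linear system of parameters: the quotient is a finite-dimensional
vector space. -/
def IsLsop (T : TopTriangulation n d) (θ : Fin d → MvPolynomial (Fin n) K) : Prop :=
  FiniteDimensional K (FaceQuot K T θ)

/-- The total degree of an exponent vector. -/
def degSum {n : ℕ} (e : Fin n →₀ ℕ) : ℕ := e.sum fun _ v => v

/-- The degree `s` part of the local face module `L_θ(Γ)`: the span of the
classes of degree `s` monomials whose underlying face is interior. -/
def Lpart (T : TopTriangulation n d) (θ : Fin d → MvPolynomial (Fin n) K) (s : ℕ) :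
    Submodule K (FaceQuot K T θ) :=
  Submodule.span K {u | ∃ e : Fin n →₀ ℕ,
    degSum e = s ∧ T.InteriorFace e.support ∧ u = proj K T θ (monomial e 1)}

/-- The local face module `L_θ(Γ)`: the image in `A_θ(Γ)` of the ideal of
interior faces. -/
def LIdeal (T : TopTriangulation n d) (θ : Fin d → MvPolynomial (Fin n) K) :
    Ideal (FaceQuot K T θ) :=
  Ideal.span {u | ∃ G : Finset (Fin n), T.InteriorFace G ∧ u = proj K T θ (faceMonomial K G)}

/-- The class of `ℓ = x_1 + ⋯ + x_n`. -/
def ellC (T : TopTriangulation n d) (θ : Fin d → MvPolynomial (Fin n) K) : FaceQuot K T θ :=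
  proj K T θ (∑ j : Fin n, X j)

/-! ### the generic special l.s.o.p. -/

/-- The index type of the variables `a_{i,j}`, `i ∈ σ({j})`. -/
def GenIdx (T : TopTriangulation n d) : Type := {p : Fin d × Fin n // p.1 ∈ T.σ {p.2}}

/-- The field `K = k(a_{i,j} : 1 ≤ j ≤ n, i ∈ σ({j}))`. -/
abbrev GenField (k : Type) [Field k] (T : TopTriangulation n d) : Type :=
  FractionRing (MvPolynomial (GenIdx T) k)

/-- The element `a_{i,j}` of `K`. -/
def genVar (k : Type) [Field k] (T : TopTriangulation n d) (w : GenIdx T) : GenField k T :=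
  algebraMap (MvPolynomial (GenIdx T) k) (GenField k T) (X w)

/-- The generic special l.s.o.p. `θ_i = ∑_{j : i ∈ σ(j)} a_{i,j} x_j`. -/
def thetaGen (k : Type) [Field k] (T : TopTriangulation n d) (i : Fin d) :
    MvPolynomial (Fin n) (GenField k T) :=
  ∑ j : Fin n, if h : i ∈ T.σ {j} then C (genVar k T ⟨(i, j), h⟩) * X j else 0

/-! ## The cone sphere `Γ̂` and its artinian Gorenstein quotient -/

/-- The faces of the sphere `Γ̂`, obtained from `Γ` by adding a cone vertex `c`
(the last element of `Fin (n+1)`) over the boundary of `Γ`. -/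
def hatFaces (T : TopTriangulation n d) : Set (Finset (Fin (n + 1))) :=
  {F | ∃ G ∈ T.faces, F = G.image Fin.castSucc ∨
        (T.σ G ≠ Finset.univ ∧ F = insert (Fin.last n) (G.image Fin.castSucc))}

/-- The Stanley–Reisner ideal of `Γ̂`. -/
def hatFaceIdeal (T : TopTriangulation n d) : Ideal (MvPolynomial (Fin (n + 1)) K) :=
  Ideal.span {p | ∃ F : Finset (Fin (n + 1)), F ∉ hatFaces T ∧ p = ∏ v ∈ F, X v}

/-- The l.s.o.p. `θ̂_i = θ_i - x_c` for `K[Γ̂]`. -/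
def thetaHat (θ : Fin d → MvPolynomial (Fin n) K) (i : Fin d) :
    MvPolynomial (Fin (n + 1)) K :=
  rename Fin.castSucc (θ i) - X (Fin.last n)

def hatRel (T : TopTriangulation n d) (θ : Fin d → MvPolynomial (Fin n) K) :
    Ideal (MvPolynomial (Fin (n + 1)) K) :=
  hatFaceIdeal K T + Ideal.span (Set.range (thetaHat K θ))

/-- The artinian Gorenstein algebra `A_θ̂(Γ̂) = K[Γ̂]/(θ̂_1, …, θ̂_d)`. -/
abbrev HatQuot (T : TopTriangulation n d) (θ : Fin d → MvPolynomial (Fin n) K) : Type :=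
  MvPolynomial (Fin (n + 1)) K ⧸ hatRel K T θ

def projHat (T : TopTriangulation n d) (θ : Fin d → MvPolynomial (Fin n) K) :
    MvPolynomial (Fin (n + 1)) K →+* HatQuot K T θ :=
  Ideal.Quotient.mk (hatRel K T θ)

/-- The class of the cone variable `x_c`. -/
def xc (T : TopTriangulation n d) (θ : Fin d → MvPolynomial (Fin n) K) : HatQuot K T θ :=
  projHat K T θ (X (Fin.last n))

/-- The ideal `(x_c)` of `A_θ̂(Γ̂)`, as a `K`-submodule. -/
def IcSub (T : TopTriangulation n d) (θ : Fin d → MvPolynomial (Fin n) K) :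
    Submodule K (HatQuot K T θ) :=
  Submodule.restrictScalars K (Ideal.span {xc K T θ})

/-- The annihilator of `x_c` in `A_θ̂(Γ̂)`, as a `K`-submodule. -/
def annXc (T : TopTriangulation n d) (θ : Fin d → MvPolynomial (Fin n) K) :
    Submodule K (HatQuot K T θ) :=
  LinearMap.ker (LinearMap.mulLeft K (xc K T θ))

/-- The span in `A_θ̂(Γ̂)` of the classes of the degree `s` monomials (in the
variables of `Γ`) with interior underlying face; this maps isomorphically onto the
degree `s` part of the local face module under `A_θ̂(Γ̂)/(x_c) ≅ A_θ(Γ)`. -/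
def LhatPart (T : TopTriangulation n d) (θ : Fin d → MvPolynomial (Fin n) K) (s : ℕ) :
    Submodule K (HatQuot K T θ) :=
  Submodule.span K {u | ∃ e : Fin n →₀ ℕ, degSum e = s ∧ T.InteriorFace e.support ∧
    u = projHat K T θ (monomial (e.mapDomain Fin.castSucc) 1)}

/-- The class of `ℓ = x_1 + ⋯ + x_n` in `A_θ̂(Γ̂)`. -/
def ellHat (T : TopTriangulation n d) (θ : Fin d → MvPolynomial (Fin n) K) : HatQuot K T θ :=
  projHat K T θ (∑ j : Fin n, X (Fin.castSucc j))


/-! ## Geometric and regular triangulations -/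

/-- The data of a geometric realization of a triangulation `σ : Γ → 2^V` of the
standard `(d-1)`-simplex: vertices of `Γ` are realized as points of the standard
simplex, cells are simplices meeting along common faces and covering the simplex,
and `σ` sends a face to the smallest face of the simplex containing it. -/
structure GeomData {n d : ℕ} (T : TopTriangulation n d) where
  p : Fin n → EuclideanSpace ℝ (Fin d)
  mem_simplex : ∀ j : Fin n, (∀ i, 0 ≤ p j i) ∧ (∑ i, p j i) = 1
  indep : ∀ F ∈ T.faces, AffineIndependent ℝ (fun j : ↥F => p ↑j)
  sigma_eq : ∀ F ∈ T.faces,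
    T.σ F = Finset.univ.filter (fun i : Fin d => ∃ j ∈ F, p j i ≠ 0)
  cover : (⋃ F ∈ T.faces, convexHull ℝ (p '' ↑F)) =
    {x : EuclideanSpace ℝ (Fin d) | (∀ i, 0 ≤ x i) ∧ (∑ i, x i) = 1}
  inter : ∀ F ∈ T.faces, ∀ G ∈ T.faces,
    convexHull ℝ (p '' ↑F) ∩ convexHull ℝ (p '' ↑G) = convexHull ℝ (p '' ↑(F ∩ G))

/-- A triangulation is regular if it admits a geometric realization which is the
projection of the lower faces of the convex hull of the vertices lifted by a
height function: every facet is cut out by an affine functional agreeing with the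
heights on the facet and lying strictly below the heights elsewhere. -/
def TopTriangulation.Regular {n d : ℕ} (T : TopTriangulation n d) : Prop :=
  ∃ D : GeomData T, ∃ ht : Fin n → ℝ,
    ∀ F ∈ T.faces, F.card = d →
      ∃ (w : Fin d → ℝ) (c₀ : ℝ),
        (∀ j ∈ F, (∑ i, w i * D.p j i) + c₀ = ht j) ∧
        (∀ j ∉ F, (∑ i, w i * D.p j i) + c₀ < ht j)

/-! ## The ring `k[x_1,…,x_t]/(x_1^3,…,x_t^3)` -/

/-- The ring `R = k[x_1,…,x_t]/(x_1^3, …, x_t^3)`. -/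
abbrev CubeQuot (k : Type) [Field k] (t : ℕ) : Type :=
  MvPolynomial (Fin t) k ⧸
    Ideal.span {p : MvPolynomial (Fin t) k | ∃ s : Fin t, p = X s ^ 3}

/-- The quotient map onto `R`. -/
def cproj (k : Type) [Field k] (t : ℕ) : MvPolynomial (Fin t) k →+* CubeQuot k t :=
  Ideal.Quotient.mk _

/-- The element `y = ∑ a_s x_s` of `R`. -/
def yEl (k : Type) [Field k] (t : ℕ) (a : Fin t → k) : CubeQuot k t :=
  cproj k t (∑ s : Fin t, C (a s) * X s)

/-- The element `z_m = ∑ a_1^{l_1 - 1} ⋯ a_t^{l_t - 1} x_1^{l_1} ⋯ x_t^{l_t}` of `R`,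
the sum over all `(l_1, …, l_t)` with `l_s ∈ {1, 2}` and `∑ l_s = m`.
(For `m > 2t` this is the empty sum, i.e. `0`.) -/
def zEl (k : Type) [Field k] (t : ℕ) (a : Fin t → k) (m : ℕ) : CubeQuot k t :=
  ∑ l ∈ Finset.univ.filter (fun l : Fin t → Fin 2 => t + ∑ s, (l s : ℕ) = m),
    cproj k t (∏ s : Fin t, (C (a s) ^ (l s : ℕ) * X s ^ ((l s : ℕ) + 1)))


/-! ## Auxiliary lemmas for Statement 8 -/

section Aux

variable {K : Type} [Field K] {n d : ℕ}

/-- A polynomial all of whose exponent vectors are standard basis vectors is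
determined by its linear coefficients. -/
lemma linear_rep (p : MvPolynomial (Fin n) K)
    (h : ∀ e ∈ p.support, ∃ j : Fin n, e = Finsupp.single j 1) :
    p = ∑ j : Fin n, monomial (Finsupp.single j 1) (coeff (Finsupp.single j 1) p) := by
  apply MvPolynomial.ext
  intro m
  rw [coeff_sum]
  simp only [coeff_monomial]
  by_cases hm : ∃ j : Fin n, m = Finsupp.single j 1
  · obtain ⟨j0, rfl⟩ := hm
    rw [Finset.sum_eq_single j0]
    · simp
    · intro b _ hb
      rw [if_neg fun hc => hb (Finsupp.single_left_injective one_ne_zero hc)]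
    · simp
  · rw [Finset.sum_eq_zero, eq_comm]
    · by_contra hc
      exact hm (h m (MvPolynomial.mem_support_iff.mpr fun h0 => hc h0.symm))
    · intro j _
      exact if_neg fun hc => hm ⟨j, hc.symm⟩

lemma degSum_add (a b : Fin n →₀ ℕ) : degSum (a + b) = degSum a + degSum b := by
  simp only [degSum]
  exact Finsupp.sum_add_index' (fun _ => rfl) (fun _ _ _ => rfl)

lemma degSum_single (j : Fin n) (k : ℕ) : degSum (Finsupp.single j k) = k := by
  simp [degSum, Finsupp.sum_single_index]

lemma monomial_squarefree_eq (e : Fin n →₀ ℕ) (h : ∀ j, e j ≤ 1) :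
    monomial e (1 : K) = faceMonomial K e.support := by
  rw [monomial_eq, C_1, one_mul, faceMonomial, Finsupp.prod]
  refine Finset.prod_congr rfl fun j hj => ?_
  have h1 : e j = 1 :=
    le_antisymm (h j) (Nat.one_le_iff_ne_zero.mpr (Finsupp.mem_support_iff.mp hj))
  rw [h1, pow_one]

lemma faceMonomial_eq (G : Finset (Fin n)) :
    faceMonomial K G = monomial (∑ j ∈ G, Finsupp.single j (1 : ℕ)) (1 : K) := by
  classical
  have happ : ∀ j'' : Fin n, (∑ j ∈ G, Finsupp.single j (1 : ℕ)) j'' =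
      if j'' ∈ G then 1 else 0 := by
    intro j''
    rw [Finset.sum_apply']
    simp [Finsupp.single_apply]
  have hle : ∀ j, (∑ j ∈ G, Finsupp.single j (1 : ℕ)) j ≤ 1 := by
    intro j; rw [happ]; split <;> omega
  have hsupp : (∑ j ∈ G, Finsupp.single j (1 : ℕ)).support = G := by
    ext j''
    rw [Finsupp.mem_support_iff, happ]
    split <;> simp_all
  rw [monomial_squarefree_eq _ hle, hsupp]

lemma proj_monomial_zero (T : TopTriangulation n d) (θ : Fin d → MvPolynomial (Fin n) K)
    {e : Fin n →₀ ℕ} (h : e.support ∉ T.faces) :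
    proj K T θ (monomial e 1) = 0 := by
  have h1 : faceMonomial K e.support ∈ faceIdeal K T :=
    Ideal.subset_span ⟨e.support, h, rfl⟩
  have h2 : monomial e (1 : K) =
      faceMonomial K e.support * ∏ j ∈ e.support, X j ^ (e j - 1) := by
    rw [faceMonomial, ← Finset.prod_mul_distrib, monomial_eq, C_1, one_mul, Finsupp.prod]
    refine Finset.prod_congr rfl fun j hj => ?_
    have hj' : e j ≠ 0 := Finsupp.mem_support_iff.mp hj
    conv_lhs => rw [show e j = (e j - 1) + 1 by omega]
    rw [pow_succ']
  have hmem : monomial e (1 : K) ∈ ringRel K T θ := by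
    rw [h2, ringRel, Submodule.add_eq_sup]
    exact Submodule.mem_sup_left (Ideal.mul_mem_right _ _ h1)
  exact Ideal.Quotient.eq_zero_iff_mem.mpr hmem

lemma proj_C_mul (T : TopTriangulation n d) (θ : Fin d → MvPolynomial (Fin n) K)
    (c : K) (p : MvPolynomial (Fin n) K) :
    proj K T θ (C c * p) = c • proj K T θ p := by
  rw [← MvPolynomial.smul_eq_C_mul]
  show Ideal.Quotient.mk _ (c • p) = c • Ideal.Quotient.mk _ p
  rw [← Ideal.Quotient.mkₐ_eq_mk K, map_smul]

end Aux

section Aux2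

variable {K : Type} [Field K] {n d : ℕ}

lemma no_kernel_vector (T : TopTriangulation n d) (θ : Fin d → MvPolynomial (Fin n) K)
    (hspec : IsSpecial K T θ) (hlsop : IsLsop K T θ)
    {G : Finset (Fin n)} (hG : G ∈ T.faces) (v : Fin n → K)
    (hsupp : ∀ j, j ∉ G → v j = 0)
    (hker : ∀ i, ∑ j : Fin n, coeff (Finsupp.single j 1) (θ i) * v j = 0) :
    v = 0 := by
  classical
  by_contra hv
  obtain ⟨j0, hj0⟩ : ∃ j0, v j0 ≠ 0 := by
    by_contra h; push_neg at h; exact hv (funext h)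
  set φ : MvPolynomial (Fin n) K →ₐ[K] Polynomial K :=
    aeval (fun j => Polynomial.C (v j) * Polynomial.X) with hφ
  have hθlin : ∀ i, ∀ e ∈ (θ i).support, ∃ j, e = Finsupp.single j 1 := by
    intro i e he
    obtain ⟨j, _, hj⟩ := hspec i e he
    exact ⟨j, hj⟩
  have hφθ : ∀ i, φ (θ i) = 0 := by
    intro i
    conv_lhs => rw [linear_rep (θ i) (hθlin i)]
    rw [map_sum]
    have hterm : ∀ j : Fin n,
        φ (monomial (Finsupp.single j 1) (coeff (Finsupp.single j 1) (θ i)))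
        = Polynomial.C (coeff (Finsupp.single j 1) (θ i) * v j) * Polynomial.X := by
      intro j
      rw [hφ, aeval_monomial]
      rw [Finsupp.prod_single_index (by simp)]
      rw [pow_one, Polynomial.algebraMap_eq, ← mul_assoc, ← Polynomial.C_mul]
    rw [Finset.sum_congr rfl (fun j _ => hterm j), ← Finset.sum_mul, ← map_sum, hker i]
    simp
  have hkill : ∀ a ∈ ringRel K T θ, φ a = 0 := by
    have h1 : faceIdeal K T ≤ RingHom.ker (φ : MvPolynomial (Fin n) K →+* Polynomial K) := by
      rw [faceIdeal, Ideal.span_le]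
      rintro p ⟨F, hF, rfl⟩
      have hex : ∃ j1 ∈ F, v j1 = 0 := by
        by_contra hc
        push_neg at hc
        have hFG : F ⊆ G := fun j hj => by
          by_contra hjG; exact hc j hj (hsupp j hjG)
        exact hF (T.down_closed G hG F hFG)
      obtain ⟨j1, hj1F, hj1v⟩ := hex
      have : φ (faceMonomial K F) = 0 := by
        rw [faceMonomial, map_prod]
        refine Finset.prod_eq_zero hj1F ?_
        rw [hφ, aeval_X, hj1v]
        simp
      simpa [RingHom.mem_ker] using this
    have h2 : Ideal.span (Set.range θ) ≤
        RingHom.ker (φ : MvPolynomial (Fin n) K →+* Polynomial K) := by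
      rw [Ideal.span_le]
      rintro p ⟨i, rfl⟩
      simpa [RingHom.mem_ker] using hφθ i
    intro a ha
    rw [ringRel, Submodule.add_eq_sup] at ha
    exact (sup_le h1 h2) ha
  set ψ : FaceQuot K T θ →ₐ[K] Polynomial K :=
    Ideal.Quotient.liftₐ (ringRel K T θ) φ hkill with hψ
  have hψmk : ∀ p : MvPolynomial (Fin n) K, ψ (proj K T θ p) = φ p := by
    intro p
    rw [hψ, Ideal.Quotient.liftₐ_apply]
    exact Ideal.Quotient.lift_mk _ _ _
  have hsurj : Function.Surjective ψ := by
    intro p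
    induction p using Polynomial.induction_on' with
    | add p q hp hq =>
      obtain ⟨a, ha⟩ := hp; obtain ⟨b, hb⟩ := hq
      exact ⟨a + b, by rw [map_add, ha, hb]⟩
    | monomial m a =>
      refine ⟨proj K T θ (C (a * ((v j0)⁻¹) ^ m) * X j0 ^ m), ?_⟩
      rw [hψmk, map_mul, map_pow, hφ, aeval_C, aeval_X, Polynomial.algebraMap_eq]
      rw [mul_pow, ← Polynomial.C_pow, ← mul_assoc, ← Polynomial.C_mul,
        mul_assoc (a := a), ← mul_pow, inv_mul_cancel₀ hj0, one_pow, mul_one,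
        Polynomial.C_mul_X_pow_eq_monomial]
  haveI : FiniteDimensional K (FaceQuot K T θ) := hlsop
  haveI : Module.Finite K (Polynomial K) := Module.Finite.of_surjective ψ.toLinearMap hsurj
  haveI : Fintype ℕ := FiniteDimensional.fintypeBasisIndex (Polynomial.basisMonomials K)
  exact not_finite ℕ

end Aux2

section Aux3

variable {K : Type} [Field K] {n d : ℕ}

lemma exists_rep (T : TopTriangulation n d) (θ : Fin d → MvPolynomial (Fin n) K)
    (hspec : IsSpecial K T θ) (hlsop : IsLsop K T θ)
    {G : Finset (Fin n)} (hG : G ∈ T.faces) {j : Fin n} (hj : j ∈ G) :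
    ∃ c : Fin d → K, ∀ j' ∈ G,
      (if j' = j then (1 : K) else 0)
        = ∑ i : Fin d, c i * coeff (Finsupp.single j' 1) (θ i) := by
  classical
  set r : Fin d → (↥G → K) :=
    fun i j' => coeff (Finsupp.single (j' : Fin n) 1) (θ i) with hr
  have hW : Submodule.span K (Set.range r) = ⊤ := by
    by_contra hWne
    have hlt : Submodule.span K (Set.range r) < ⊤ := lt_top_iff_ne_top.mpr hWne
    haveI : Nontrivial ((↥G → K) ⧸ Submodule.span K (Set.range r)) :=
      Submodule.Quotient.nontrivial_iff.mpr hlt.ne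
    set b := Module.Basis.ofVectorSpace K ((↥G → K) ⧸ Submodule.span K (Set.range r)) with hb
    obtain ⟨i0⟩ := b.index_nonempty
    set f : (↥G → K) →ₗ[K] K :=
      (b.coord i0) ∘ₗ (Submodule.span K (Set.range r)).mkQ with hf
    have hfW : ∀ w ∈ Submodule.span K (Set.range r), f w = 0 := by
      intro w hw
      have : (Submodule.span K (Set.range r)).mkQ w = 0 :=
        (Submodule.Quotient.mk_eq_zero _).mpr hw
      simp [hf, LinearMap.comp_apply, this]
    set v : Fin n → K :=
      fun j' => if h : j' ∈ G then f (Pi.single (⟨j', h⟩ : ↥G) 1) else 0 with hv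
    have hval : ∀ w : ↥G → K, f w = ∑ j'' : ↥G, w j'' * v ↑j'' := by
      intro w
      conv_lhs => rw [← Finset.univ_sum_single w]
      rw [map_sum]
      refine Finset.sum_congr rfl fun j'' _ => ?_
      have h1 : Pi.single j'' (w j'') = w j'' • (Pi.single j'' (1 : K) : ↥G → K) := by
        rw [← Pi.single_smul, smul_eq_mul, mul_one]
      have h2 : v ↑j'' = f (Pi.single j'' 1) := by
        simp only [hv]
        rw [dif_pos j''.2]
      rw [h1, map_smul, smul_eq_mul, h2]
    have hv0 : v = 0 := by
      apply no_kernel_vector T θ hspec hlsop hG v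
      · intro j' hj'; simp [hv, hj']
      · intro i
        have h1 : ∑ j' : Fin n, coeff (Finsupp.single j' 1) (θ i) * v j'
            = ∑ j'' : ↥G, coeff (Finsupp.single (↑j'' : Fin n) 1) (θ i) * v ↑j'' := by
          rw [Finset.sum_coe_sort G
            (fun j' => coeff (Finsupp.single j' 1) (θ i) * v j')]
          refine (Finset.sum_subset G.subset_univ ?_).symm
          intro x _ hx
          simp [hv, hx]
        rw [h1, ← hval (r i)]
        exact hfW (r i) (Submodule.subset_span ⟨i, rfl⟩)
    obtain ⟨w, hw⟩ := Submodule.mkQ_surjective _ (b i0)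
    have hfw : f w = 1 := by
      rw [hf, LinearMap.comp_apply, hw, Module.Basis.coord_apply, Module.Basis.repr_self,
        Finsupp.single_eq_same]
    rw [hval w, hv0] at hfw
    simp at hfw
  have ht : (fun j'' : ↥G => if (j'' : Fin n) = j then (1 : K) else 0)
      ∈ Submodule.span K (Set.range r) := hW ▸ Submodule.mem_top
  rw [Submodule.mem_span_range_iff_exists_fun] at ht
  obtain ⟨c, hc⟩ := ht
  refine ⟨c, fun j' hj' => ?_⟩
  have h2 := congrFun hc ⟨j', hj'⟩
  simp only [Finset.sum_apply, Pi.smul_apply, smul_eq_mul, hr] at h2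
  exact h2.symm

end Aux3

section Aux4

variable {K : Type} [Field K] {n d : ℕ}

/-- The span of the classes of squarefree interior monomials. -/
def sqSpan (T : TopTriangulation n d) (θ : Fin d → MvPolynomial (Fin n) K) :
    Submodule K (FaceQuot K T θ) :=
  Submodule.span K {u | ∃ G : Finset (Fin n), T.InteriorFace G ∧
    u = proj K T θ (faceMonomial K G)}

lemma monomial_mem_span (T : TopTriangulation n d) (θ : Fin d → MvPolynomial (Fin n) K)
    (hspec : IsSpecial K T θ) (hlsop : IsLsop K T θ) :
    ∀ μ : ℕ, ∀ e : Fin n →₀ ℕ, degSum e ≤ e.support.card + μ →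
    e.support ∈ T.faces → T.σ e.support = Finset.univ →
    proj K T θ (monomial e 1) ∈ sqSpan T θ := by
  classical
  have hcard : ∀ e : Fin n →₀ ℕ, (¬ ∀ j, e j ≤ 1) → e.support.card < degSum e := by
    intro e hc
    push_neg at hc
    obtain ⟨j, hj2⟩ := hc
    have hjs : j ∈ e.support := Finsupp.mem_support_iff.mpr (by omega)
    have h1 : ∑ _j' ∈ e.support, 1 < ∑ j' ∈ e.support, e j' :=
      Finset.sum_lt_sum
        (fun i hi => Nat.one_le_iff_ne_zero.mpr (Finsupp.mem_support_iff.mp hi))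
        ⟨j, hjs, by omega⟩
    simpa [degSum, Finsupp.sum] using h1
  intro μ
  induction μ with
  | zero =>
    intro e hdeg hface hσ
    have hsq : ∀ j, e j ≤ 1 := by
      by_contra hc
      have := hcard e hc
      omega
    rw [monomial_squarefree_eq e hsq]
    exact Submodule.subset_span ⟨e.support, ⟨hface, hσ⟩, rfl⟩
  | succ μ ih =>
    intro e hdeg hface hσ
    by_cases hsq : ∀ j, e j ≤ 1
    · rw [monomial_squarefree_eq e hsq]
      exact Submodule.subset_span ⟨e.support, ⟨hface, hσ⟩, rfl⟩
    push_neg at hsq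
    obtain ⟨j, hj2⟩ := hsq
    have hjG : j ∈ e.support := Finsupp.mem_support_iff.mpr (by omega)
    obtain ⟨c, hc⟩ := exists_rep T θ hspec hlsop hface hjG
    set e' : Fin n →₀ ℕ := e - Finsupp.single j 1 with he'
    have he'app : ∀ j'', e' j'' = e j'' - (if j = j'' then 1 else 0) := by
      intro j''
      rw [he', Finsupp.tsub_apply, Finsupp.single_apply]
    have hee : Finsupp.single j 1 + e' = e := by
      ext j''
      rw [Finsupp.add_apply, he'app j'', Finsupp.single_apply]
      by_cases h : j = j''
      · subst h
        simp only [reduceIte]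
        omega
      · simp [h]
    have hsupp' : e'.support = e.support := by
      ext j''
      rw [Finsupp.mem_support_iff, Finsupp.mem_support_iff, he'app j'']
      by_cases h : j = j''
      · subst h
        simp only [reduceIte]
        omega
      · simp [h]
    set q : MvPolynomial (Fin n) K := X j - ∑ i : Fin d, C (c i) * θ i with hq
    have hqlin : ∀ m ∈ q.support, ∃ j', m = Finsupp.single j' 1 := by
      intro m hm
      by_contra hne
      push_neg at hne
      have hcm : coeff m q ≠ 0 := fun h0 =>
        (MvPolynomial.mem_support_iff.mp hm) h0
      apply hcm
      rw [hq, coeff_sub, coeff_X', coeff_sum, if_neg (fun h => hne j h.symm)]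
      rw [Finset.sum_eq_zero, sub_zero]
      intro i _
      rw [coeff_C_mul]
      have h0 : coeff m (θ i) = 0 := by
        by_contra h
        obtain ⟨j', _, hj'⟩ := hspec i m (MvPolynomial.mem_support_iff.mpr h)
        exact hne j' hj'
      rw [h0, mul_zero]
    have hqG : ∀ j' ∈ e.support, coeff (Finsupp.single j' 1) q = 0 := by
      intro j' hj'
      rw [hq, coeff_sub, coeff_X', coeff_sum]
      have h2 : ∀ i : Fin d, coeff (Finsupp.single j' 1) (C (c i) * θ i)
          = c i * coeff (Finsupp.single j' 1) (θ i) := fun i => coeff_C_mul _ _ _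
      rw [Finset.sum_congr rfl (fun i _ => h2 i), ← hc j' hj']
      by_cases hjj : j' = j
      · subst hjj
        rw [if_pos rfl, if_pos rfl, sub_self]
      · rw [if_neg (fun h => hjj (Finsupp.single_left_injective one_ne_zero h).symm),
          if_neg hjj, sub_zero]
    -- the key identity
    have hXm : monomial e (1 : K) = X j * monomial e' 1 := by
      rw [X, monomial_mul, one_mul, hee]
    have hqm : proj K T θ (monomial e 1) = proj K T θ (q * monomial e' 1) := by
      rw [hXm]
      have hdiff : X j * monomial e' (1 : K) - q * monomial e' 1
          = (∑ i : Fin d, C (c i) * θ i) * monomial e' 1 := by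
        rw [hq]; ring
      have hmem : (∑ i : Fin d, C (c i) * θ i) * monomial e' (1 : K) ∈ ringRel K T θ := by
        apply Ideal.mul_mem_right
        rw [ringRel, Submodule.add_eq_sup]
        refine Submodule.mem_sup_right (Ideal.sum_mem _ fun i _ => ?_)
        exact Ideal.mul_mem_left _ _ (Ideal.subset_span ⟨i, rfl⟩)
      have h0 : proj K T θ (X j * monomial e' 1 - q * monomial e' 1) = 0 := by
        rw [hdiff]
        exact Ideal.Quotient.eq_zero_iff_mem.mpr hmem
      rw [map_sub] at h0
      exact sub_eq_zero.mp h0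
    have hqrep : q * monomial e' (1 : K) =
        ∑ j' : Fin n, C (coeff (Finsupp.single j' 1) q)
          * monomial (Finsupp.single j' 1 + e') 1 := by
      conv_lhs => rw [linear_rep q hqlin]
      rw [Finset.sum_mul]
      refine Finset.sum_congr rfl fun j' _ => ?_
      rw [monomial_mul, C_mul_monomial]
    have key : proj K T θ (monomial e 1) =
        ∑ j' : Fin n, (coeff (Finsupp.single j' 1) q)
          • proj K T θ (monomial (Finsupp.single j' 1 + e') 1) := by
      rw [hqm, hqrep, map_sum]
      exact Finset.sum_congr rfl fun j' _ => proj_C_mul T θ _ _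
    rw [key]
    apply Submodule.sum_mem
    intro j' _
    by_cases hj'G : j' ∈ e.support
    · rw [hqG j' hj'G, zero_smul]
      exact Submodule.zero_mem _
    · apply Submodule.smul_mem
      set e'' : Fin n →₀ ℕ := Finsupp.single j' 1 + e' with he''
      by_cases hface'' : e''.support ∈ T.faces
      · have hsupp'' : e''.support = insert j' e.support := by
          rw [he'', Finsupp.support_add_eq, Finsupp.support_single_ne_zero j' one_ne_zero,
            hsupp']
          · ext x; simp [or_comm]  -- {j'} ∪ supp = insert
          · rw [Finsupp.support_single_ne_zero j' one_ne_zero, hsupp']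
            simp [hj'G]
        apply ih e''
        · -- degree bound
          have hd1 : degSum e'' = degSum e := by
            rw [he'', degSum_add, ← hee, degSum_add, degSum_single, degSum_single]
          have hc1 : e''.support.card = e.support.card + 1 := by
            rw [hsupp'', Finset.card_insert_of_notMem hj'G]
          omega
        · exact hface''
        · have hsub : e.support ⊆ e''.support := by
            rw [hsupp'']; exact Finset.subset_insert _ _
          refine Finset.univ_subset_iff.mp ?_
          rw [← hσ]
          exact T.mono hface hface'' hsub
      · rw [proj_monomial_zero T θ hface'']
        exact Submodule.zero_mem _

end Aux4

section Aux5

variable {K : Type} [Field K] {n d : ℕ}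

lemma monomial_mem_span' (T : TopTriangulation n d) (θ : Fin d → MvPolynomial (Fin n) K)
    (hspec : IsSpecial K T θ) (hlsop : IsLsop K T θ)
    (e : Fin n →₀ ℕ) {G : Finset (Fin n)} (hGint : T.InteriorFace G)
    (hsub : G ⊆ e.support) :
    proj K T θ (monomial e 1) ∈ sqSpan T θ := by
  by_cases hface : e.support ∈ T.faces
  · refine monomial_mem_span T θ hspec hlsop (degSum e) e (Nat.le_add_left _ _) hface ?_
    refine Finset.univ_subset_iff.mp ?_
    rw [← hGint.2]
    exact T.mono hGint.1 hface hsub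
  · rw [proj_monomial_zero T θ hface]
    exact Submodule.zero_mem _

lemma mul_mem_sqSpan (T : TopTriangulation n d) (θ : Fin d → MvPolynomial (Fin n) K)
    (hspec : IsSpecial K T θ) (hlsop : IsLsop K T θ) :
    ∀ x ∈ sqSpan T θ, ∀ r : FaceQuot K T θ, r * x ∈ sqSpan T θ := by
  classical
  intro x hx
  induction hx using Submodule.span_induction with
  | mem u hu =>
    intro r
    obtain ⟨G, hGint, rfl⟩ := hu
    obtain ⟨p, rfl⟩ := Ideal.Quotient.mk_surjective r
    show proj K T θ p * proj K T θ (faceMonomial K G) ∈ _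
    rw [← map_mul]
    have hps : proj K T θ (p * faceMonomial K G)
        = ∑ m ∈ p.support, proj K T θ (monomial m (coeff m p) * faceMonomial K G) := by
      conv_lhs => rw [MvPolynomial.as_sum p]
      rw [Finset.sum_mul, map_sum]
    rw [hps]
    apply Submodule.sum_mem
    intro m _
    set eG : Fin n →₀ ℕ := ∑ j ∈ G, Finsupp.single j (1 : ℕ) with heG
    have heGapp : ∀ j'' : Fin n, eG j'' = if j'' ∈ G then 1 else 0 := by
      intro j''
      rw [heG, Finset.sum_apply']
      simp [Finsupp.single_apply]
    have h1 : monomial m (coeff m p) * faceMonomial K G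
        = C (coeff m p) * monomial (m + eG) 1 := by
      rw [faceMonomial_eq, ← heG, monomial_mul, C_mul_monomial, mul_one]
    rw [h1, proj_C_mul]
    apply Submodule.smul_mem
    refine monomial_mem_span' T θ hspec hlsop (m + eG) hGint ?_
    intro j'' hj''
    rw [Finsupp.mem_support_iff, Finsupp.add_apply, heGapp j'', if_pos hj'']
    omega
  | zero => intro r; rw [mul_zero]; exact Submodule.zero_mem _
  | add x y _ _ hx hy =>
    intro r; rw [mul_add]; exact Submodule.add_mem _ (hx r) (hy r)
  | smul c x _ hx =>
    intro r; rw [mul_smul_comm]; exact Submodule.smul_mem _ _ (hx r)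

end Aux5


/-- Let `σ : Γ → 2^V` be a quasi-geometric triangulation of a
`(d-1)`-dimensional simplex and `θ` a special l.s.o.p. for `K[Γ]`.  The classes of
the squarefree monomials `x^G`, for `G` an interior face, span the local face
module `L_θ(Γ)` (the image of the ideal of interior faces) as a `K`-vector
space. -/
theorem localFaceModule_spanned_by_squarefree (K : Type) [Field K] {n d : ℕ}
    (T : TopTriangulation n d) (hqg : T.QuasiGeometric)
    (θ : Fin d → MvPolynomial (Fin n) K) (hspec : IsSpecial K T θ)
    (hlsop : IsLsop K T θ) :
    Submodule.restrictScalars K (LIdeal K T θ) =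
      Submodule.span K {u | ∃ G : Finset (Fin n), T.InteriorFace G ∧
        u = proj K T θ (faceMonomial K G)} := by
  apply le_antisymm
  · intro x hx
    have hx' : x ∈ LIdeal K T θ := hx
    rw [LIdeal] at hx'
    show x ∈ sqSpan T θ
    clear hx
    induction hx' using Submodule.span_induction with
    | mem u hu => exact Submodule.subset_span hu
    | zero => exact Submodule.zero_mem _
    | add a b _ _ ha hb => exact Submodule.add_mem _ ha hb
    | smul r a _ ha =>
      rw [smul_eq_mul]
      exact mul_mem_sqSpan T θ hspec hlsop a ha r
  · rw [Submodule.span_le]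
    intro u hu
    exact Ideal.subset_span hu

end LocalFace
end
end

section
/- Let k be a field, t ≥ 1, and R = k[x_1,…,x_t]/(x_1^3,…,x_t^3). Fix a_1,…,a_t ∈ k and set y = Σ_{s=1}^t a_s x_s. For t ≤ m ≤ 2t define z_m = Σ (Π_{s=1}^t a_s^{l_s−1}) x_1^{l_1}⋯x_t^{l_t}, the sum over all (l_1,…,l_t) with l_s ∈ {1,2} and Σ_s l_s = m, and set z_{2t+1} = 0. Then y·z_m = (m+1−t)·z_{m+1} in R for all t ≤ m ≤ 2t; consequently y^r·(x_1⋯x_t) = r!·z_{t+r} for all 0 ≤ r ≤ t. -/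
open Finset MvPolynomial

set_option synthInstance.maxHeartbeats 1000000
set_option maxHeartbeats 4000000

noncomputable section

namespace LocalFace

/-! ## Face rings and local face modules -/

variable (K : Type) [Field K] {n d : ℕ}

section Aux

variable {k : Type} [Field k] {t : ℕ}

/-- The monomial summand of `zEl`. -/
private def Pm (k : Type) [Field k] (t : ℕ) (a : Fin t → k) (l : Fin t → Fin 2) :
    MvPolynomial (Fin t) k :=
  ∏ s : Fin t, (C (a s) ^ (l s : ℕ) * X s ^ ((l s : ℕ) + 1))

private lemma zEl_eq (a : Fin t → k) (m : ℕ) :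
    zEl k t a m = ∑ l ∈ Finset.univ.filter
        (fun l : Fin t → Fin 2 => t + ∑ s, (l s : ℕ) = m),
      cproj k t (Pm k t a l) := rfl

private lemma fin2 (v : Fin 2) : v = 0 ∨ v = 1 := by revert v; decide

private lemma cproj_cube (s : Fin t) :
    cproj k t ((X s : MvPolynomial (Fin t) k) ^ 3) = 0 := by
  rw [cproj, Ideal.Quotient.eq_zero_iff_mem]
  exact Ideal.subset_span ⟨s, rfl⟩

private lemma update_mul (a : Fin t → k) (l : Fin t → Fin 2) (s : Fin t) (h : l s = 0) :
    (C (a s) * X s) * Pm k t a l = Pm k t a (Function.update l s 1) := by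
  unfold Pm
  rw [← Finset.mul_prod_erase Finset.univ _ (Finset.mem_univ s),
      ← Finset.mul_prod_erase Finset.univ
        (fun s' => C (a s') ^ ((Function.update l s 1 s' : Fin 2) : ℕ)
          * X s' ^ (((Function.update l s 1 s' : Fin 2) : ℕ) + 1)) (Finset.mem_univ s)]
  have hrest : ∀ s' ∈ Finset.univ.erase s,
      C (a s') ^ ((Function.update l s 1 s' : Fin 2) : ℕ)
          * X s' ^ (((Function.update l s 1 s' : Fin 2) : ℕ) + 1)
        = C (a s') ^ ((l s' : ℕ)) * X s' ^ ((l s' : ℕ) + 1) := by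
    intro s' hs'
    rw [Function.update_of_ne (Finset.ne_of_mem_erase hs')]
  rw [Finset.prod_congr rfl hrest, Function.update_self, h]
  simp only [Fin.val_zero, Fin.val_one, pow_zero, pow_one, one_mul]
  ring

private lemma kill (a : Fin t → k) (l : Fin t → Fin 2) (s : Fin t) (h : l s = 1) :
    cproj k t ((C (a s) * X s) * Pm k t a l) = 0 := by
  have hd : (C (a s) * X s) * Pm k t a l
      = X s ^ 3 * (C (a s) ^ 2 * ∏ s' ∈ Finset.univ.erase s,
          (C (a s') ^ (l s' : ℕ) * X s' ^ ((l s' : ℕ) + 1))) := by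
    unfold Pm
    rw [← Finset.mul_prod_erase Finset.univ _ (Finset.mem_univ s), h]
    simp only [Fin.val_one, pow_one]
    ring
  rw [hd, map_mul, cproj_cube, zero_mul]

private lemma sum_update (l : Fin t → Fin 2) (s : Fin t) (v : Fin 2) :
    ∑ s', ((Function.update l s v s' : Fin 2) : ℕ)
      = (v : ℕ) + ∑ s' ∈ Finset.univ.erase s, ((l s' : Fin 2) : ℕ) := by
  have hfun : (fun s' => ((Function.update l s v s' : Fin 2) : ℕ))
      = Function.update (fun s' => ((l s' : Fin 2) : ℕ)) s (v : ℕ) := by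
    funext s'
    by_cases hss : s' = s
    · subst hss; simp
    · simp [Function.update_of_ne hss]
  calc ∑ s', ((Function.update l s v s' : Fin 2) : ℕ)
      = ∑ s', Function.update (fun s' => ((l s' : Fin 2) : ℕ)) s (v : ℕ) s' := by rw [hfun]
    _ = (v : ℕ) + ∑ s' ∈ Finset.univ.erase s, ((l s' : Fin 2) : ℕ) := by
        rw [Finset.sum_update_of_mem (Finset.mem_univ s), Finset.erase_eq]

private lemma sum_split (l : Fin t → Fin 2) (s : Fin t) :
    ∑ s', ((l s' : Fin 2) : ℕ)
      = ((l s : Fin 2) : ℕ) + ∑ s' ∈ Finset.univ.erase s, ((l s' : Fin 2) : ℕ) :=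
  (Finset.add_sum_erase Finset.univ _ (Finset.mem_univ s)).symm

end Aux

/-- In `R = k[x_1,…,x_t]/(x_1^3,…,x_t^3)`, with
`y = ∑ a_s x_s` and `z_m` as above, one has `y · z_m = (m+1-t) · z_{m+1}` for all
`t ≤ m ≤ 2t`; consequently `y^r · (x_1 ⋯ x_t) = r! · z_{t+r}` for `0 ≤ r ≤ t`. -/
theorem y_mul_z (k : Type) [Field k] (t : ℕ) (ht : 1 ≤ t) (a : Fin t → k) :
    (∀ m : ℕ, t ≤ m → m ≤ 2 * t →
      yEl k t a * zEl k t a m = ((m + 1 - t : ℕ) : k) • zEl k t a (m + 1)) ∧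
    (∀ r : ℕ, r ≤ t →
      yEl k t a ^ r * cproj k t (∏ s : Fin t, X s) =
        ((r.factorial : ℕ) : k) • zEl k t a (t + r)) := by
  have key : ∀ m : ℕ, t ≤ m → m ≤ 2 * t →
      yEl k t a * zEl k t a m = ((m + 1 - t : ℕ) : k) • zEl k t a (m + 1) := by
    intro m hm hm2
    rw [yEl, zEl_eq, zEl_eq, Finset.mul_sum]
    have step : ∀ l : Fin t → Fin 2,
        cproj k t (∑ s, C (a s) * X s) * cproj k t (Pm k t a l)
          = ∑ s ∈ Finset.univ.filter (fun s => l s = 0),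
              cproj k t (Pm k t a (Function.update l s 1)) := by
      intro l
      rw [← map_mul, Finset.sum_mul, map_sum,
        ← Finset.sum_filter_add_sum_filter_not Finset.univ (fun s => l s = 0)]
      have h1 : ∀ s ∈ Finset.univ.filter (fun s => l s = 0),
          cproj k t ((C (a s) * X s) * Pm k t a l)
            = cproj k t (Pm k t a (Function.update l s 1)) := by
        intro s hs
        rw [update_mul a l s (Finset.mem_filter.mp hs).2]
      have h2 : ∀ s ∈ Finset.univ.filter (fun s => ¬ l s = 0),
          cproj k t ((C (a s) * X s) * Pm k t a l) = 0 := by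
        intro s hs
        exact kill a l s ((fin2 (l s)).resolve_left (Finset.mem_filter.mp hs).2)
      rw [Finset.sum_congr rfl h1, Finset.sum_congr rfl h2, Finset.sum_const_zero,
        add_zero]
    rw [Finset.sum_congr rfl (fun l _ => step l), Nat.cast_smul_eq_nsmul,
      Finset.smul_sum]
    have hcard : ∀ l ∈ Finset.univ.filter
        (fun l : Fin t → Fin 2 => t + ∑ s, (l s : ℕ) = m + 1),
        (Finset.univ.filter fun s => l s = 1).card = m + 1 - t := by
      intro l hl
      have hsum : t + ∑ s, ((l s : Fin 2) : ℕ) = m + 1 := (Finset.mem_filter.mp hl).2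
      have hcf : (Finset.univ.filter fun s => l s = 1).card = ∑ s, ((l s : Fin 2) : ℕ) := by
        rw [Finset.card_filter]
        refine Finset.sum_congr rfl fun s _ => ?_
        rcases fin2 (l s) with h | h <;> simp [h]
      omega
    have hrhs : ∀ l ∈ Finset.univ.filter
        (fun l : Fin t → Fin 2 => t + ∑ s, (l s : ℕ) = m + 1),
        (m + 1 - t) • cproj k t (Pm k t a l)
          = ∑ _s ∈ Finset.univ.filter (fun s => l s = 1), cproj k t (Pm k t a l) := by
      intro l hl
      rw [Finset.sum_const, hcard l hl]
    rw [Finset.sum_congr rfl hrhs]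
    rw [Finset.sum_sigma', Finset.sum_sigma']
    refine Finset.sum_nbij' (fun p => ⟨Function.update p.1 p.2 1, p.2⟩)
      (fun p => ⟨Function.update p.1 p.2 0, p.2⟩) ?_ ?_ ?_ ?_ ?_
    · rintro ⟨l, s⟩ hp
      simp only [Finset.mem_sigma, Finset.mem_filter, Finset.mem_univ, true_and] at hp ⊢
      obtain ⟨hsumm, hls⟩ := hp
      have h1 := sum_update l s 1
      have h2 := sum_split l s
      rw [hls] at h2
      refine ⟨by simp only [h1]; simp at h2 ⊢; omega, Function.update_self _ _ _⟩
    · rintro ⟨l, s⟩ hp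
      simp only [Finset.mem_sigma, Finset.mem_filter, Finset.mem_univ, true_and] at hp ⊢
      obtain ⟨hsumm, hls⟩ := hp
      have h1 := sum_update l s 0
      have h2 := sum_split l s
      rw [hls] at h2
      refine ⟨by simp only [h1]; simp at h2 ⊢; omega, Function.update_self _ _ _⟩
    · rintro ⟨l, s⟩ hp
      simp only [Finset.mem_sigma, Finset.mem_filter, Finset.mem_univ, true_and] at hp
      obtain ⟨_, hls⟩ := hp
      simp only [Sigma.mk.inj_iff, heq_eq_eq, and_true]
      rw [Function.update_idem, ← hls, Function.update_eq_self]
    · rintro ⟨l, s⟩ hp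
      simp only [Finset.mem_sigma, Finset.mem_filter, Finset.mem_univ, true_and] at hp
      obtain ⟨_, hls⟩ := hp
      simp only [Sigma.mk.inj_iff, heq_eq_eq, and_true]
      rw [Function.update_idem, ← hls, Function.update_eq_self]
    · rintro ⟨l, s⟩ _
      rfl
  refine ⟨key, ?_⟩
  have hzt : zEl k t a t = cproj k t (∏ s : Fin t, X s) := by
    rw [zEl_eq]
    have hfil : Finset.univ.filter
        (fun l : Fin t → Fin 2 => t + ∑ s, (l s : ℕ) = t) = {fun _ => 0} := by
      ext l
      simp only [Finset.mem_filter, Finset.mem_univ, true_and, Finset.mem_singleton]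
      constructor
      · intro h
        have hs0 : ∀ s ∈ Finset.univ, ((l s : Fin 2) : ℕ) = 0 :=
          (Finset.sum_eq_zero_iff).mp (by omega)
        funext s
        exact Fin.ext (hs0 s (Finset.mem_univ s))
      · intro h; subst h; simp
    rw [hfil, Finset.sum_singleton]
    unfold Pm
    simp
  intro r hr
  induction r with
  | zero =>
      simp only [pow_zero, one_mul, Nat.factorial_zero, Nat.cast_one, one_smul,
        Nat.add_zero]
      exact hzt.symm
  | succ n ih =>
      have hn : n ≤ t := Nat.le_of_succ_le hr
      have ihn := ih hn
      have hk := key (t + n) (Nat.le_add_right t n) (by omega)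
      calc yEl k t a ^ (n + 1) * cproj k t (∏ s : Fin t, X s)
          = yEl k t a * (yEl k t a ^ n * cproj k t (∏ s : Fin t, X s)) := by
            rw [pow_succ]; ring
        _ = yEl k t a * (((n.factorial : ℕ) : k) • zEl k t a (t + n)) := by rw [ihn]
        _ = ((n.factorial : ℕ) : k) • (yEl k t a * zEl k t a (t + n)) := by
            rw [mul_smul_comm]
        _ = ((n.factorial : ℕ) : k) • (((t + n + 1 - t : ℕ) : k) • zEl k t a (t + n + 1)) := by
            rw [hk]
        _ = (((n + 1).factorial : ℕ) : k) • zEl k t a (t + (n + 1)) := by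
            rw [smul_smul]
            have h1 : t + n + 1 - t = n + 1 := by omega
            have h2 : t + n + 1 = t + (n + 1) := by omega
            rw [h1, h2, Nat.factorial_succ, Nat.cast_mul, mul_comm]

end LocalFace
end
end

section
/- Let k be a field of characteristic p with 0 < p ≤ t, and let R = k[x_1,…,x_t]/(x_1^3,…,x_t^3). Then for every element y = Σ_{s=1}^t a_s x_s in the k-span of x_1,…,x_t, one has y^t·(x_1⋯x_t) = 0 in R, while x_1⋯x_t ≠ 0 and x_1^2⋯x_t^2 ≠ 0. Hence multiplication by y^t is not an isomorphism from the one-dimensional degree-t component spanned by x_1⋯x_t onto the one-dimensional degree-2t component spanned by x_1^2⋯x_t^2 (so the strong Lefschetz property fails for the local face module L_θ(Γ_t) in characteristic p ≤ t). -/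
open Finset MvPolynomial

set_option synthInstance.maxHeartbeats 1000000
set_option maxHeartbeats 4000000

noncomputable section

namespace LocalFace

/-! ## Face rings and local face modules -/

variable (K : Type) [Field K] {n d : ℕ}

/-- The ideal of polynomials all of whose coefficients at exponents `≤ 2`
componentwise vanish. -/
def lowCoeffIdeal (k : Type) [Field k] (t : ℕ) : Ideal (MvPolynomial (Fin t) k) where
  carrier := {f | ∀ e : Fin t →₀ ℕ, (∀ s, e s ≤ 2) → coeff e f = 0}
  add_mem' := by
    intro f g hf hg e he
    rw [coeff_add, hf e he, hg e he, add_zero]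
  zero_mem' := by intro e he; simp
  smul_mem' := by
    intro g f hf e he
    rw [smul_eq_mul, coeff_mul]
    refine Finset.sum_eq_zero fun x hx => ?_
    rw [hf x.2 fun s => ?_, mul_zero]
    have hxe := Finset.HasAntidiagonal.mem_antidiagonal.mp hx
    calc x.2 s ≤ x.1 s + x.2 s := Nat.le_add_left _ _
      _ = e s := by rw [← Finsupp.add_apply, hxe]
      _ ≤ 2 := he s

lemma cube_span_le_lowCoeffIdeal (k : Type) [Field k] (t : ℕ) :
    Ideal.span {p : MvPolynomial (Fin t) k | ∃ s : Fin t, p = X s ^ 3} ≤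
      lowCoeffIdeal k t := by
  rw [Ideal.span_le]
  rintro _ ⟨s, rfl⟩
  intro e he
  rw [X_pow_eq_monomial, coeff_monomial]
  have : Finsupp.single s 3 ≠ e := by
    intro h
    have := he s
    rw [← h, Finsupp.single_eq_same] at this
    omega
  simp [this]

lemma prod_X_pow_eq (k : Type) [Field k] (t d : ℕ) (hd : 0 < d) :
    (∏ s : Fin t, (X s : MvPolynomial (Fin t) k) ^ d) =
      monomial (Finsupp.equivFunOnFinite.symm fun _ => d) 1 := by
  rw [← prod_X_pow_eq_monomial]
  have hsupp : (Finsupp.equivFunOnFinite.symm fun _ => d : Fin t →₀ ℕ).support =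
      Finset.univ := by
    ext s
    simp [Finsupp.mem_support_iff, hd.ne']
  rw [hsupp]
  exact Finset.prod_congr rfl fun s _ => by simp

lemma prod_X_pow_ne_zero (k : Type) [Field k] (t d : ℕ) (hd1 : 0 < d) (hd2 : d ≤ 2) :
    cproj k t (∏ s : Fin t, X s ^ d) ≠ 0 := by
  intro h
  have hmem : (∏ s : Fin t, (X s : MvPolynomial (Fin t) k) ^ d) ∈
      Ideal.span {p : MvPolynomial (Fin t) k | ∃ s : Fin t, p = X s ^ 3} :=
    Ideal.Quotient.eq_zero_iff_mem.1 h
  have hlow := cube_span_le_lowCoeffIdeal k t hmem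
  have := hlow (Finsupp.equivFunOnFinite.symm fun _ => d) (fun s => by simpa using hd2)
  rw [prod_X_pow_eq k t d hd1, coeff_monomial] at this
  simp at this

/-- Let `k` be a field of characteristic `p` with `0 < p ≤ t`, and
`R = k[x_1,…,x_t]/(x_1^3,…,x_t^3)`.  For every `y = ∑ a_s x_s` one has
`y^t · (x_1 ⋯ x_t) = 0`, while `x_1 ⋯ x_t ≠ 0` and `x_1^2 ⋯ x_t^2 ≠ 0`; hence
multiplication by `y^t` does not map the line spanned by `x_1 ⋯ x_t` onto the line
spanned by `x_1^2 ⋯ x_t^2` (failure of strong Lefschetz in characteristic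
`p ≤ t`). -/
theorem strong_lefschetz_fails_char_p (k : Type) [Field k] (p t : ℕ)
    (hchar : CharP k p) (hp : 0 < p) (hpt : p ≤ t) (a : Fin t → k) :
    yEl k t a ^ t * cproj k t (∏ s : Fin t, X s) = 0 ∧
    cproj k t (∏ s : Fin t, X s) ≠ 0 ∧
    cproj k t (∏ s : Fin t, X s ^ 2) ≠ 0 ∧
    (∀ u ∈ Submodule.span k {cproj k t (∏ s : Fin t, X s)},
      yEl k t a ^ t * u ≠ cproj k t (∏ s : Fin t, X s ^ 2)) := by
  have hprime : p.Prime :=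
    ((CharP.char_is_prime_or_zero k p).resolve_right hp.ne')
  haveI := Fact.mk hprime
  haveI : CharP (MvPolynomial (Fin t) k) p := inferInstance
  haveI : ExpChar (MvPolynomial (Fin t) k) p := .prime hprime
  -- the key ideal membership
  have hmem : (∑ s : Fin t, C (a s) * X s : MvPolynomial (Fin t) k) ^ p
      * ∏ s : Fin t, X s ∈
      Ideal.span {q : MvPolynomial (Fin t) k | ∃ s : Fin t, q = X s ^ 3} := by
    rw [sum_pow_char, Finset.sum_mul]
    refine Ideal.sum_mem _ fun s _ => ?_
    obtain ⟨q, hq⟩ : ∃ q, p = q + 2 := ⟨p - 2, (Nat.sub_add_cancel hprime.two_le).symm⟩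
    have h1 : (C (a s) * X s : MvPolynomial (Fin t) k) ^ p * ∏ r : Fin t, X r
        = X s ^ 3 * (C (a s) ^ p * X s ^ q * ∏ r ∈ Finset.univ.erase s, X r) := by
      rw [← Finset.mul_prod_erase _ _ (Finset.mem_univ s), hq]
      ring
    rw [h1]
    exact Ideal.mul_mem_right _ _ (Ideal.subset_span ⟨s, rfl⟩)
  have h0 : yEl k t a ^ t * cproj k t (∏ s : Fin t, X s) = 0 := by
    have hy : yEl k t a = cproj k t (∑ s : Fin t, C (a s) * X s) := rfl
    have hexp : (∑ s : Fin t, C (a s) * X s : MvPolynomial (Fin t) k) ^ t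
        = (∑ s : Fin t, C (a s) * X s) ^ (t - p) * (∑ s : Fin t, C (a s) * X s) ^ p := by
      rw [← pow_add, Nat.sub_add_cancel hpt]
    rw [hy, ← map_pow, ← map_mul, hexp, mul_assoc, map_mul]
    have hz : cproj k t ((∑ s : Fin t, C (a s) * X s) ^ p * ∏ s : Fin t, X s) = 0 :=
      Ideal.Quotient.eq_zero_iff_mem.2 hmem
    rw [hz, mul_zero]
  have h1 : cproj k t (∏ s : Fin t, X s) ≠ 0 := by
    have := prod_X_pow_ne_zero k t 1 one_pos one_le_two
    simpa using this
  have h2 : cproj k t (∏ s : Fin t, X s ^ 2) ≠ 0 :=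
    prod_X_pow_ne_zero k t 2 two_pos le_rfl
  refine ⟨h0, h1, h2, ?_⟩
  intro u hu
  obtain ⟨c, rfl⟩ := Submodule.mem_span_singleton.1 hu
  rw [mul_smul_comm, h0, smul_zero]
  exact fun h => h2 h.symm

end LocalFace
end
end

section
/- Let σ : Γ → 2^V be a vertex-induced, semi-small topological triangulation of a (d−1)-dimensional simplex (semi-small meaning 2·e(F) ≤ |σ(F)| for every face F, where e(F) = |σ(F)| − |F|), and let F be an interior face of Γ with |F| = d/2. Then |σ(G)| = 2·|G| for every subset G ⊆ F. -/
open Finset MvPolynomial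

set_option synthInstance.maxHeartbeats 1000000
set_option maxHeartbeats 4000000

noncomputable section

namespace LocalFace

/-! ## Face rings and local face modules -/

variable (K : Type) [Field K] {n d : ℕ}

/-- Let `σ : Γ → 2^V` be a vertex-induced semi-small
triangulation of a `(d-1)`-dimensional simplex, and let `F` be an interior face
with `|F| = d/2`.  Then `|σ(G)| = 2|G|` for every subset `G ⊆ F`. -/
theorem sigma_card_of_semismall_interior {n d : ℕ} (T : TopTriangulation n d)
    (hvi : T.VertexInduced)
    (hss : ∀ F ∈ T.faces, 2 * ((T.σ F).card - F.card) ≤ (T.σ F).card)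
    (F : Finset (Fin n)) (hF : T.InteriorFace F) (hcard : 2 * F.card = d) :
    ∀ G ⊆ F, (T.σ G).card = 2 * G.card := by
  intro G hG
  have hGf : G ∈ T.faces := T.down_closed F hF.1 G hG
  have hFG : F \ G ∈ T.faces := T.down_closed F hF.1 _ Finset.sdiff_subset
  have hsub : T.σ G ∪ T.σ (F \ G) ⊆ T.σ F :=
    Finset.union_subset (T.mono hGf hF.1 hG) (T.mono hFG hF.1 Finset.sdiff_subset)
  have hunion : T.σ G ∪ T.σ (F \ G) = T.σ F := by
    by_contra hne
    refine hvi ⟨F, hF.1, T.σ G ∪ T.σ (F \ G),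
      Finset.ssubset_iff_subset_ne.mpr ⟨hsub, hne⟩, fun j hj => ?_⟩
    by_cases hjG : j ∈ G
    · exact subset_trans
        (T.mono (T.vertex_mem j) hGf (Finset.singleton_subset_iff.mpr hjG))
        Finset.subset_union_left
    · exact subset_trans
        (T.mono (T.vertex_mem j) hFG
          (Finset.singleton_subset_iff.mpr (Finset.mem_sdiff.mpr ⟨hj, hjG⟩)))
        Finset.subset_union_right
  have hcardF : (T.σ F).card = d := by rw [hF.2]; simp
  have hle : (T.σ F).card ≤ (T.σ G).card + (T.σ (F \ G)).card := by
    rw [← hunion]; exact Finset.card_union_le _ _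
  have h1 := hss G hGf
  have h2 := hss (F \ G) hFG
  have hsd : (F \ G).card = F.card - G.card := Finset.card_sdiff_of_subset hG
  have hGle : G.card ≤ F.card := Finset.card_le_card hG
  omega

end LocalFace
end
end
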